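/- Let E be a real normed vector space, p* ∈ E, and let p : ℕ → E be a sequence with ‖p t − p*‖ → 0 as t → ∞. Let m : ℕ → E satisfy, for every integer t ≥ 5, the sliding update m t = ((t−3)/(t+1)) • m (t−1) + (4/(t+1)) • p t. Then ‖m t − p*‖ → 0 as t → ∞. (Theorem 1, Memory Convergence, for the immediate memory unit.) -/

import Mathlib

/-- Theorem 1 (Memory Convergence, immediate memory unit): if the predictions
`p t` converge to `p*` in norm, then the memory sequence `m` defined by the
sliding update `m t = ((t−3)/(t+1)) • m (t−1) + (4/(t+1)) • p t` for `t ≥ 5`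
also converges to `p*` in norm. -/
theorem immediate_memory_convergence
    {E : Type*} [NormedAddCommGroup E] [NormedSpace ℝ E]
    (pstar : E) (p m : ℕ → E)
    (hp : Filter.Tendsto (fun t : ℕ => ‖p t - pstar‖) Filter.atTop (nhds 0))
    (hm : ∀ t : ℕ, 5 ≤ t →
      m t = ((((t : ℝ) - 3) / ((t : ℝ) + 1)) • m (t - 1)
        + ((4 : ℝ) / ((t : ℝ) + 1)) • p t)) :
    Filter.Tendsto (fun t : ℕ => ‖m t - pstar‖) Filter.atTop (nhds 0) := by
  rw [Metric.tendsto_atTop] at hp ⊢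
  intro ε hε
  obtain ⟨N0, hN0⟩ := hp (ε/4) (by linarith)
  set N := max N0 5 with hNdef
  have hN5 : 5 ≤ N := le_max_right _ _
  have hb : ∀ t, N ≤ t → ‖p t - pstar‖ ≤ ε/4 := by
    intro t ht
    have := hN0 t (le_trans (le_max_left _ _) ht)
    rw [Real.dist_eq, sub_zero, abs_of_nonneg (norm_nonneg _)] at this
    linarith
  set g : ℕ → ℝ := fun t => ((t:ℝ)+1)*(t:ℝ)*((t:ℝ)-1)*((t:ℝ)-2) with hg
  have hgpos : ∀ t : ℕ, 3 ≤ t → 0 < g t := by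
    intro t ht
    have h3 : (3:ℝ) ≤ (t:ℝ) := by exact_mod_cast ht
    have h1 : (0:ℝ) < (t:ℝ)+1 := by linarith
    have h2 : (0:ℝ) < (t:ℝ) := by linarith
    have h4 : (0:ℝ) < (t:ℝ)-1 := by linarith
    have h5 : (0:ℝ) < (t:ℝ)-2 := by linarith
    exact mul_pos (mul_pos (mul_pos h1 h2) h4) h5
  have hge : ∀ t : ℕ, 3 ≤ t → (t:ℝ) ≤ g t := by
    intro t ht
    have h3 : (3:ℝ) ≤ (t:ℝ) := by exact_mod_cast ht
    have : g t = ((t:ℝ)+1)*(t:ℝ)*((t:ℝ)-1)*((t:ℝ)-2) := rfl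
    nlinarith [sq_nonneg ((t:ℝ)-2), sq_nonneg ((t:ℝ))]
  set C := g N * ‖m N - pstar‖ with hC
  have hCnn : 0 ≤ C := mul_nonneg (le_of_lt (hgpos N (by omega))) (norm_nonneg _)
  have key : ∀ k : ℕ, ‖m (N + k) - pstar‖ ≤ C / g (N + k) + ε/4 := by
    intro k
    induction k with
    | zero =>
      have hgN : g N ≠ 0 := ne_of_gt (hgpos N (by omega))
      rw [Nat.add_zero, hC, mul_div_cancel_left₀ _ hgN]
      linarith
    | succ k ih =>
      have ht : 5 ≤ N + k + 1 := by omega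
      have hrec := hm (N + k + 1) ht
      have hsub : N + k + 1 - 1 = N + k := by omega
      rw [hsub] at hrec
      have htR : (6:ℝ) ≤ ((N + k + 1 : ℕ) : ℝ) := by exact_mod_cast (by omega : 6 ≤ N + k + 1)
      set a : ℝ := (((N + k + 1 : ℕ) : ℝ) - 3) / (((N + k + 1 : ℕ) : ℝ) + 1) with ha
      set c : ℝ := (4 : ℝ) / (((N + k + 1 : ℕ) : ℝ) + 1) with hc
      have hden : (0:ℝ) < ((N + k + 1 : ℕ) : ℝ) + 1 := by linarith
      have ha0 : 0 ≤ a := div_nonneg (by linarith) (by linarith)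
      have hc0 : 0 ≤ c := div_nonneg (by norm_num) (by linarith)
      have hac : a + c = 1 := by
        rw [ha, hc, ← add_div, div_eq_one_iff_eq (ne_of_gt hden)]
        ring
      have heq : m (N + k + 1) - pstar = a • (m (N + k) - pstar) + c • (p (N + k + 1) - pstar) := by
        have hps : a • pstar + c • pstar = pstar := by rw [← add_smul, hac, one_smul]
        rw [hrec, smul_sub, smul_sub, sub_add_sub_comm, hps]
      have hkey2 : a * (C / g (N + k)) = C / g (N + k + 1) := by
        have hgk : g (N + k) ≠ 0 := ne_of_gt (hgpos (N + k) (by omega))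
        have hgk1 : g (N + k + 1) ≠ 0 := ne_of_gt (hgpos (N + k + 1) (by omega))
        rw [ha, div_mul_div_comm, div_eq_div_iff (mul_ne_zero (ne_of_gt hden) hgk) hgk1]
        simp only [hg]
        push_cast
        ring
      calc ‖m (N + k + 1) - pstar‖
          ≤ a * ‖m (N + k) - pstar‖ + c * ‖p (N + k + 1) - pstar‖ := by
            rw [heq]
            refine (norm_add_le _ _).trans ?_
            rw [norm_smul, norm_smul, Real.norm_eq_abs, Real.norm_eq_abs,
              abs_of_nonneg ha0, abs_of_nonneg hc0]
        _ ≤ a * (C / g (N + k) + ε/4) + c * (ε/4) := by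
            have := hb (N + k + 1) (by omega)
            gcongr
        _ = a * (C / g (N + k)) + (a + c) * (ε/4) := by ring
        _ = C / g (N + k + 1) + ε/4 := by rw [hkey2, hac, one_mul]
  obtain ⟨M, hM⟩ := exists_nat_gt (4 * C / ε)
  refine ⟨max N M, fun t ht => ?_⟩
  have htN : N ≤ t := le_trans (le_max_left _ _) ht
  have htM : M ≤ t := le_trans (le_max_right _ _) ht
  obtain ⟨k, rfl⟩ := Nat.exists_eq_add_of_le htN
  have h1 := key k
  have hgt : (0:ℝ) < g (N + k) := hgpos _ (by omega)
  have htpos : (0:ℝ) < ((N + k : ℕ) : ℝ) := by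
    exact_mod_cast (by omega : 0 < N + k)
  have h2 : C / g (N + k) ≤ C / ((N + k : ℕ) : ℝ) := by
    gcongr
    exact hge _ (by omega)
  have hMR : (4 * C / ε) < ((N + k : ℕ) : ℝ) := by
    refine lt_of_lt_of_le hM ?_
    exact_mod_cast htM
  have h3 : C / ((N + k : ℕ) : ℝ) ≤ ε / 4 := by
    rw [div_le_iff₀ htpos]
    rw [div_lt_iff₀ hε] at hMR
    nlinarith
  rw [Real.dist_eq, sub_zero, abs_of_nonneg (norm_nonneg _)]
  linarith
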